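/- Let κ ∈ (0,1), g = −3/2 + κ, and C₀ > 0. Let u_I < u_H, let r : (u_I, u_H] → (0,∞) be continuously differentiable with r'(u) < 0, r(u) → ∞ as u → u_I⁺, and −r'(u) ≥ r(u)²/C₀ for all u, and let ψ : (u_I, u_H] → ℝ be continuously differentiable. Then there exists a constant C > 0, depending only on κ, C₀, r(u_H), and u_H − u_I, such that for every u ∈ (u_I, u_H]: |r(u)^{3/2−κ}ψ(u)| ≤ C·[ ( ∫_{u_I}^{u_H} (r⁴/(−r'))(∇̃ψ)² du' )^{1/2} + ( ∫_{u_I}^{u_H} (−r')ψ² du' )^{1/2} ], where ∇̃ψ = ψ' − g(r'/r)ψ. -/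

import Mathlib

open MeasureTheory Set Filter

private lemma cs_aux {μ : Measure ℝ} {f g : ℝ → ℝ}
    (hfm : AEStronglyMeasurable f μ) (hgm : AEStronglyMeasurable g μ)
    (hf0 : 0 ≤ᵐ[μ] f) (hg0 : 0 ≤ᵐ[μ] g)
    (hf : Integrable (fun x => f x ^ 2) μ) (hg : Integrable (fun x => g x ^ 2) μ) :
    Integrable (fun x => f x * g x) μ ∧
      ∫ x, f x * g x ∂μ ≤ Real.sqrt (∫ x, f x ^ 2 ∂μ) * Real.sqrt (∫ x, g x ^ 2 ∂μ) := by
  have hint : Integrable (fun x => f x * g x) μ := by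
    refine Integrable.mono' ((hf.add hg).div_const 2) (hfm.mul hgm) ?_
    refine Eventually.of_forall fun x => ?_
    simp only [Pi.add_apply]
    rw [Real.norm_eq_abs, abs_mul]
    nlinarith [sq_nonneg (|f x| - |g x|), sq_abs (f x), sq_abs (g x), abs_nonneg (f x),
      abs_nonneg (g x)]
  refine ⟨hint, ?_⟩
  have hpq : Real.HolderConjugate 2 2 := (Real.holderConjugate_iff_eq_conjExponent one_lt_two).2 (by norm_num)
  have h2 : (ENNReal.ofReal (2:ℝ)) = 2 := by rw [ENNReal.ofReal_ofNat]
  have hfℒ : MemLp f (ENNReal.ofReal (2:ℝ)) μ := by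
    rw [h2, memLp_two_iff_integrable_sq hfm]; exact hf
  have hgℒ : MemLp g (ENNReal.ofReal (2:ℝ)) μ := by
    rw [h2, memLp_two_iff_integrable_sq hgm]; exact hg
  have H := integral_mul_le_Lp_mul_Lq_of_nonneg hpq hf0 hg0 hfℒ hgℒ
  have e1 : ∀ (h : ℝ → ℝ), ∫ x, h x ^ (2:ℝ) ∂μ = ∫ x, h x ^ 2 ∂μ := by
    intro h
    refine integral_congr_ae (Eventually.of_forall fun x => ?_)
    simp [Real.rpow_two]
  rw [e1 f, e1 g] at H
  refine H.trans (le_of_eq ?_)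
  rw [Real.sqrt_eq_rpow, Real.sqrt_eq_rpow]

set_option maxHeartbeats 1000000 in
theorem stmt_13 (κ g C₀ A L : ℝ) (hκ : κ ∈ Set.Ioo (0 : ℝ) 1) (hg : g = -3 / 2 + κ)
    (hC₀ : 0 < C₀) :
    ∃ C > 0, ∀ (uI uH : ℝ) (r ψ r' ψ' : ℝ → ℝ),
      uI < uH →
      (∀ u ∈ Set.Ioc uI uH, HasDerivWithinAt r (r' u) (Set.Ioc uI uH) u) →
      ContinuousOn r' (Set.Ioc uI uH) →
      (∀ u ∈ Set.Ioc uI uH, 0 < r u) →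
      (∀ u ∈ Set.Ioc uI uH, r' u < 0) →
      Filter.Tendsto r (nhdsWithin uI (Set.Ioi uI)) Filter.atTop →
      (∀ u ∈ Set.Ioc uI uH, (r u) ^ 2 / C₀ ≤ -(r' u)) →
      (∀ u ∈ Set.Ioc uI uH, HasDerivWithinAt ψ (ψ' u) (Set.Ioc uI uH) u) →
      ContinuousOn ψ' (Set.Ioc uI uH) →
      MeasureTheory.IntegrableOn
        (fun u => (r u) ^ 4 / (-(r' u)) * (ψ' u - g * (r' u / r u) * ψ u) ^ 2)
        (Set.Ioc uI uH) →
      MeasureTheory.IntegrableOn (fun u => (-(r' u)) * (ψ u) ^ 2) (Set.Ioc uI uH) →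
      r uH = A → uH - uI = L →
      ∀ u ∈ Set.Ioc uI uH,
        |r u ^ ((3 : ℝ) / 2 - κ) * ψ u|
          ≤ C * (Real.sqrt (∫ u' in Set.Ioc uI uH,
                  (r u') ^ 4 / (-(r' u')) * (ψ' u' - g * (r' u' / r u') * ψ u') ^ 2)
              + Real.sqrt (∫ u' in Set.Ioc uI uH, (-(r' u')) * (ψ u') ^ 2)) := by
  obtain ⟨hκ0, hκ1⟩ := hκ
  by_cases hA0 : 0 < A
  swap
  · refine ⟨1, one_pos, ?_⟩
    intro uI uH r ψ r' ψ' hlt hr hr'c hrpos hr'neg htend hC₀' hψ hψ'c hInt1 hInt2 hA hL u hu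
    exact absurd (hA ▸ hrpos uH ⟨hlt, le_rfl⟩) hA0
  -- constants
  set c₁ : ℝ := A ^ (-(2*κ)) / (2*κ) with hc₁def
  set c₂ : ℝ := (A ^ (2*κ - 2) - (2*A) ^ (2*κ - 2)) / (2 - 2*κ) with hc₂def
  have hc₁ : 0 < c₁ := div_pos (Real.rpow_pos_of_pos hA0 _) (by linarith)
  have hc₂ : 0 < c₂ := by
    have h2A : (2*A) ^ (2*κ-2) = 2 ^ (2*κ-2) * A ^ (2*κ-2) := Real.mul_rpow (by norm_num) hA0.le
    have h21 : (2:ℝ) ^ (2*κ-2) < 1 :=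
      Real.rpow_lt_one_of_one_lt_of_neg one_lt_two (by linarith)
    have hApos : (0:ℝ) < A ^ (2*κ-2) := Real.rpow_pos_of_pos hA0 _
    have : (2*A) ^ (2*κ-2) < A ^ (2*κ-2) := by
      rw [h2A]; nlinarith
    exact div_pos (by linarith) (by linarith)
  refine ⟨Real.sqrt c₁ + 1 / Real.sqrt c₂, by positivity, ?_⟩
  intro uI uH r ψ r' ψ' hlt hr hr'c hrpos hr'neg htend hC₀' hψ hψ'c hInt1 hInt2 hA hL u hu
  set S := Set.Ioc uI uH with hSdef
  have hSmeas : MeasurableSet S := measurableSet_Ioc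
  have hrc : ContinuousOn r S := fun x hx => (hr x hx).continuousWithinAt
  have hψc : ContinuousOn ψ S := fun x hx => (hψ x hx).continuousWithinAt
  have hrne : ∀ x ∈ S, r x ≠ 0 := fun x hx => ne_of_gt (hrpos x hx)
  have hr'pos : ∀ x ∈ S, 0 < -(r' x) := fun x hx => neg_pos.2 (hr'neg x hx)
  have hmemnhds : ∀ x ∈ Set.Ioo uI uH, S ∈ nhds x := fun x hx =>
    mem_of_superset (isOpen_Ioo.mem_nhds hx) Ioo_subset_Ioc_self
  have hrD : ∀ x ∈ Set.Ioo uI uH, HasDerivAt r (r' x) x := fun x hx =>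
    (hr x (Ioo_subset_Ioc_self hx)).hasDerivAt (hmemnhds x hx)
  have hψD : ∀ x ∈ Set.Ioo uI uH, HasDerivAt ψ (ψ' x) x := fun x hx =>
    (hψ x (Ioo_subset_Ioc_self hx)).hasDerivAt (hmemnhds x hx)
  -- the main functions
  set φ : ℝ → ℝ := fun t => r t ^ ((3:ℝ)/2 - κ) * ψ t with hφdef
  set Dφ : ℝ → ℝ := fun t => r t ^ ((3:ℝ)/2 - κ) * (ψ' t - g * (r' t / r t) * ψ t) with hDφdef
  set F₁ : ℝ → ℝ := fun t => (r t) ^ 4 / (-(r' t)) * (ψ' t - g * (r' t / r t) * ψ t) ^ 2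
    with hF₁def
  set E₁ : ℝ := ∫ t in S, F₁ t with hE₁def
  set E₂ : ℝ := ∫ t in S, (-(r' t)) * (ψ t) ^ 2 with hE₂def
  -- generic FTC for powers of r
  have hFTC : ∀ p0 : ℝ, p0 ≠ 0 → ∀ x ∈ S,
      ∫ t in Set.Ioc x uH, (-(r' t)) * r t ^ (p0 - 1) = (r x ^ p0 - A ^ p0) / p0 := by
    intro p0 hp0 x hx
    have hsub : Set.Icc x uH ⊆ S := fun t ht => ⟨lt_of_lt_of_le hx.1 ht.1, ht.2⟩
    have hcont : ContinuousOn (fun t => -(r t ^ p0 / p0)) (Set.Icc x uH) :=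
      (((hrc.mono hsub).rpow_const fun t ht => Or.inl (hrne t (hsub ht))).div_const p0).neg
    have hderiv : ∀ t ∈ Set.Ioo x uH,
        HasDerivWithinAt (fun t => -(r t ^ p0 / p0)) ((-(r' t)) * r t ^ (p0 - 1))
          (Set.Ioi t) t := by
      intro t ht
      have htS : t ∈ Set.Ioo uI uH := ⟨hx.1.trans ht.1, ht.2⟩
      have h1 := (((hrD t htS).rpow_const (p := p0)
        (Or.inl (hrne t (Ioo_subset_Ioc_self htS)))).div_const p0).neg
      have he : -(r' t * p0 * r t ^ (p0 - 1) / p0) = (-(r' t)) * r t ^ (p0 - 1) := by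
        field_simp
      rw [← he]
      exact h1.hasDerivWithinAt
    have hintc : ContinuousOn (fun t => (-(r' t)) * r t ^ (p0 - 1)) (Set.Icc x uH) :=
      ((hr'c.mono hsub).neg).mul
        ((hrc.mono hsub).rpow_const fun t ht => Or.inl (hrne t (hsub ht)))
    have hint : IntervalIntegrable (fun t => (-(r' t)) * r t ^ (p0 - 1)) volume x uH :=
      hintc.intervalIntegrable_of_Icc hx.2
    have h := intervalIntegral.integral_eq_sub_of_hasDeriv_right_of_le hx.2 hcont hderiv hint
    rw [← intervalIntegral.integral_of_le hx.2, h, hA]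
    field_simp
    ring
  -- bound for the weight integral
  have hbound : ∀ x ∈ S,
      ∫ t in Set.Ioc x uH, (-(r' t)) * r t ^ (-(2*κ) - 1) ≤ c₁ := by
    intro x hx
    rw [hFTC (-(2*κ)) (by intro h; nlinarith) x hx]
    have hxpos : (0:ℝ) < r x ^ (-(2*κ)) := Real.rpow_pos_of_pos (hrpos x hx) _
    have hApos : (0:ℝ) < A ^ (-(2*κ)) := Real.rpow_pos_of_pos hA0 _
    have he : (r x ^ (-(2*κ)) - A ^ (-(2*κ))) / (-(2*κ))
        = (A ^ (-(2*κ)) - r x ^ (-(2*κ))) / (2*κ) := by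
      rw [div_eq_div_iff (by linarith) (by linarith)]
      ring
    rw [he, hc₁def, div_le_div_iff₀ (by linarith) (by linarith)]
    nlinarith
  -- integrability of the weight function
  have hh2cont : ContinuousOn (fun t => (-(r' t)) * r t ^ (-(2*κ) - 1)) S :=
    (hr'c.neg).mul (hrc.rpow_const fun x hx => Or.inl (hrne x hx))
  have hnn : ∀ t ∈ S, 0 ≤ (-(r' t)) * r t ^ (-(2*κ) - 1) := fun t ht =>
    mul_nonneg (hr'pos t ht).le (Real.rpow_nonneg (hrpos t ht).le _)
  set a : ℕ → ℝ := fun n => uI + (uH - uI) / (n + 1) with hadef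
  have haS : ∀ n, a n ∈ S := by
    intro n
    have hpos : (0:ℝ) < (uH - uI) / ((n:ℝ)+1) := by
      apply div_pos (by linarith) (by positivity)
    have h1 : (uH - uI) / ((n:ℝ)+1) ≤ uH - uI := by
      apply div_le_self (by linarith)
      have : (0:ℝ) ≤ (n:ℝ) := Nat.cast_nonneg n
      linarith
    constructor
    · simp only [hadef]; push_cast; linarith
    · simp only [hadef]; push_cast; linarith
  have ha : Tendsto a atTop (nhds uI) := by
    have h0 : Tendsto (fun n : ℕ => (uH - uI) / ((n:ℝ) + 1)) atTop (nhds 0) := by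
      simpa [div_eq_mul_inv] using
        (tendsto_one_div_add_atTop_nhds_zero_nat).const_mul (uH - uI)
    have := tendsto_const_nhds (x := uI) (f := atTop (α := ℕ)) |>.add h0
    simpa using this
  have hIccsubS : ∀ {x}, x ∈ S → Set.Icc x uH ⊆ S := fun {x} hx t ht =>
    ⟨lt_of_lt_of_le hx.1 ht.1, ht.2⟩
  have hh2fi : ∀ x ∈ S,
      IntegrableOn (fun t => (-(r' t)) * r t ^ (-(2*κ) - 1)) (Set.Ioc x uH) := fun x hx =>
    ((hh2cont.mono (hIccsubS hx)).integrableOn_compact isCompact_Icc).mono_set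
      Ioc_subset_Icc_self
  have hh2int : IntegrableOn (fun t => (-(r' t)) * r t ^ (-(2*κ) - 1)) S := by
    apply integrableOn_Ioc_of_intervalIntegral_norm_bounded_left (a := a) (l := atTop) (I := c₁)
      (fun n => hh2fi (a n) (haS n)) ha
    refine Eventually.of_forall fun n => ?_
    have he : ∀ t ∈ Set.Ioc (a n) uH,
        ‖(-(r' t)) * r t ^ (-(2*κ) - 1)‖ = (-(r' t)) * r t ^ (-(2*κ) - 1) := by
      intro t ht
      exact Real.norm_of_nonneg (hnn t ⟨(haS n).1.trans ht.1, ht.2⟩)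
    rw [setIntegral_congr_fun measurableSet_Ioc he]
    exact hbound (a n) (haS n)
  have hh2le : ∫ t in S, (-(r' t)) * r t ^ (-(2*κ) - 1) ≤ c₁ := by
    have hmono : Monotone (fun n : ℕ => Set.Ioc (a n) uH) := by
      intro m n hmn
      apply Set.Ioc_subset_Ioc_left
      simp only [hadef]
      have h1 : (uH - uI) / ((n:ℝ)+1) ≤ (uH - uI) / ((m:ℝ)+1) := by
        have hc : ((m:ℝ)+1) ≤ ((n:ℝ)+1) := by exact_mod_cast Nat.succ_le_succ hmn
        gcongr
      linarith
    have hUnion : (⋃ n, Set.Ioc (a n) uH) = S := by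
      apply Set.Subset.antisymm
      · exact Set.iUnion_subset fun n t ht => ⟨(haS n).1.trans ht.1, ht.2⟩
      · intro t ht
        obtain ⟨n, hn⟩ := exists_nat_gt ((uH - uI) / (t - uI))
        refine Set.mem_iUnion.2 ⟨n, ?_, ht.2⟩
        have htI : (0:ℝ) < t - uI := sub_pos.2 ht.1
        rw [div_lt_iff₀ htI] at hn
        simp only [hadef]
        have h2 : (uH - uI) / ((n:ℝ)+1) < t - uI := by
          rw [div_lt_iff₀ (by positivity)]
          nlinarith
        linarith
    have htd := tendsto_setIntegral_of_monotone (fun n => measurableSet_Ioc) hmono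
      (hUnion ▸ hh2int)
    rw [hUnion] at htd
    exact le_of_tendsto htd (Eventually.of_forall fun n => hbound (a n) (haS n))
  -- pointwise identities
  have hgradcont : ContinuousOn (fun t => ψ' t - g * (r' t / r t) * ψ t) S :=
    hψ'c.sub ((continuousOn_const.mul (hr'c.div hrc hrne)).mul hψc)
  have hDφcont : ContinuousOn Dφ S :=
    (hrc.rpow_const fun x hx => Or.inl (hrne x hx)).mul hgradcont
  have hF₁cont : ContinuousOn F₁ S :=
    ((hrc.pow 4).div hr'c.neg fun x hx => ne_of_gt (hr'pos x hx)).mul (hgradcont.pow 2)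
  have hF₁nn : ∀ t ∈ S, 0 ≤ F₁ t := fun t ht =>
    mul_nonneg (div_nonneg (by positivity) (hr'pos t ht).le) (sq_nonneg _)
  have hDφsq : ∀ t ∈ S, Dφ t ^ 2 = F₁ t * ((-(r' t)) * r t ^ (-(2*κ) - 1)) := by
    intro t ht
    have hrt := hrpos t ht
    have hr't := hr'pos t ht
    have hr'ne : -(r' t) ≠ 0 := ne_of_gt hr't
    have e : r t ^ ((3:ℝ)/2 - κ) * r t ^ ((3:ℝ)/2 - κ) = (r t)^4 * r t ^ (-(2*κ) - 1) := by
      rw [← Real.rpow_add hrt, ← Real.rpow_natCast (r t) 4, ← Real.rpow_add hrt]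
      congr 1
      push_cast
      ring
    calc Dφ t ^ 2
        = (r t ^ ((3:ℝ)/2 - κ) * r t ^ ((3:ℝ)/2 - κ)) * (ψ' t - g * (r' t / r t) * ψ t)^2 := by
          simp only [hDφdef]; ring
      _ = ((r t)^4 * r t ^ (-(2*κ) - 1)) * (ψ' t - g * (r' t / r t) * ψ t)^2 := by rw [e]
      _ = F₁ t * ((-(r' t)) * r t ^ (-(2*κ) - 1)) := by
          simp only [hF₁def]
          have hx : ((r t)^4 / (-(r' t)) * (ψ' t - g * (r' t / r t) * ψ t) ^ 2)
              * ((-(r' t)) * r t ^ (-(2*κ) - 1))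
              = (r t)^4 * r t ^ (-(2*κ) - 1) * (ψ' t - g * (r' t / r t) * ψ t)^2
                * ((-(r' t)) / (-(r' t))) := by ring
          rw [hx, div_self hr'ne, mul_one]
  have habsDφ : ∀ t ∈ S,
      |Dφ t| = Real.sqrt (F₁ t) * Real.sqrt ((-(r' t)) * r t ^ (-(2*κ) - 1)) := by
    intro t ht
    rw [← Real.sqrt_sq_eq_abs, hDφsq t ht, Real.sqrt_mul (hF₁nn t ht)]
  -- Cauchy–Schwarz
  have hfm : AEStronglyMeasurable (fun t => Real.sqrt (F₁ t)) (volume.restrict S) :=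
    (Real.continuous_sqrt.comp_continuousOn hF₁cont).aestronglyMeasurable hSmeas
  have hgm : AEStronglyMeasurable (fun t => Real.sqrt ((-(r' t)) * r t ^ (-(2*κ) - 1)))
      (volume.restrict S) :=
    (Real.continuous_sqrt.comp_continuousOn hh2cont).aestronglyMeasurable hSmeas
  have hfsq : Integrable (fun t => Real.sqrt (F₁ t) ^ 2) (volume.restrict S) := by
    refine hInt1.congr ((ae_restrict_iff' hSmeas).2 (Eventually.of_forall fun t ht => ?_))
    exact (Real.sq_sqrt (hF₁nn t ht)).symm
  have hgsq : Integrable (fun t => Real.sqrt ((-(r' t)) * r t ^ (-(2*κ) - 1)) ^ 2)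
      (volume.restrict S) := by
    refine hh2int.congr ((ae_restrict_iff' hSmeas).2 (Eventually.of_forall fun t ht => ?_))
    exact (Real.sq_sqrt (hnn t ht)).symm
  obtain ⟨hprodint, hCS⟩ := cs_aux hfm hgm
    (Eventually.of_forall fun t => Real.sqrt_nonneg _)
    (Eventually.of_forall fun t => Real.sqrt_nonneg _) hfsq hgsq
  have hIntAbs : IntegrableOn (fun t => |Dφ t|) S := by
    refine hprodint.congr ((ae_restrict_iff' hSmeas).2 (Eventually.of_forall fun t ht => ?_))
    exact (habsDφ t ht).symm
  have hL1 : ∫ t in S, |Dφ t| ≤ Real.sqrt E₁ * Real.sqrt c₁ := by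
    have h1 : ∫ t in S, |Dφ t|
        = ∫ t in S, Real.sqrt (F₁ t) * Real.sqrt ((-(r' t)) * r t ^ (-(2*κ) - 1)) :=
      setIntegral_congr_fun hSmeas fun t ht => habsDφ t ht
    rw [h1]
    refine hCS.trans ?_
    have hE₁eq : ∫ t in S, Real.sqrt (F₁ t) ^ 2 = E₁ :=
      setIntegral_congr_fun hSmeas fun t ht => Real.sq_sqrt (hF₁nn t ht)
    have hgsqeq : ∫ t in S, Real.sqrt ((-(r' t)) * r t ^ (-(2*κ) - 1)) ^ 2
        = ∫ t in S, (-(r' t)) * r t ^ (-(2*κ) - 1) :=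
      setIntegral_congr_fun hSmeas fun t ht => Real.sq_sqrt (hnn t ht)
    rw [hE₁eq, hgsqeq]
    exact mul_le_mul_of_nonneg_left (Real.sqrt_le_sqrt hh2le) (Real.sqrt_nonneg _)
  -- derivative of φ and FTC
  have hφD : ∀ t ∈ Set.Ioo uI uH, HasDerivAt φ (Dφ t) t := by
    intro t ht
    have ht' := Ioo_subset_Ioc_self ht
    have hrt := hrpos t ht'
    have h1 := ((hrD t ht).rpow_const (p := (3:ℝ)/2 - κ) (Or.inl (hrne t ht'))).mul (hψD t ht)
    have he : r' t * ((3:ℝ)/2 - κ) * r t ^ ((3:ℝ)/2 - κ - 1) * ψ t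
        + r t ^ ((3:ℝ)/2 - κ) * ψ' t = Dφ t := by
      rw [Real.rpow_sub hrt, Real.rpow_one]
      simp only [hDφdef, hg]
      field_simp
      ring
    rw [← he]
    exact h1
  have hFTCφ : ∀ x y, x ∈ S → y ∈ S → x ≤ y → φ y - φ x = ∫ t in x..y, Dφ t := by
    intro x y hxS hyS hxy
    have hsub : Set.Icc x y ⊆ S := fun t ht => ⟨lt_of_lt_of_le hxS.1 ht.1, le_trans ht.2 hyS.2⟩
    have hφcont : ContinuousOn φ (Set.Icc x y) :=
      ((hrc.mono hsub).rpow_const fun z hz => Or.inl (hrne z (hsub hz))).mul (hψc.mono hsub)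
    have hder : ∀ t ∈ Set.Ioo x y, HasDerivWithinAt φ (Dφ t) (Set.Ioi t) t := fun t ht =>
      (hφD t ⟨hxS.1.trans ht.1, lt_of_lt_of_le ht.2 hyS.2⟩).hasDerivWithinAt
    have hint : IntervalIntegrable Dφ volume x y :=
      (hDφcont.mono hsub).intervalIntegrable_of_Icc hxy
    exact (intervalIntegral.integral_eq_sub_of_hasDeriv_right_of_le hxy hφcont hder hint).symm
  have hdiff : ∀ x y, x ∈ S → y ∈ S → |φ y - φ x| ≤ ∫ t in S, |Dφ t| := by
    have key : ∀ x y, x ∈ S → y ∈ S → x ≤ y → |φ y - φ x| ≤ ∫ t in S, |Dφ t| := by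
      intro x y hxS hyS hxy
      rw [hFTCφ x y hxS hyS hxy]
      refine (intervalIntegral.abs_integral_le_integral_abs hxy).trans ?_
      rw [intervalIntegral.integral_of_le hxy]
      refine setIntegral_mono_set hIntAbs
        ((ae_restrict_iff' hSmeas).2 (Eventually.of_forall fun t _ => abs_nonneg _)) ?_
      exact HasSubset.Subset.eventuallyLE fun t ht => ⟨hxS.1.trans ht.1, le_trans ht.2 hyS.2⟩
    intro x y hxS hyS
    rcases le_total x y with h | h
    · exact key x y hxS hyS h
    · rw [abs_sub_comm]
      exact key y x hyS hxS h
  -- choose w with r w ≥ 2A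
  have hwex : ∃ w, w ∈ Set.Ioo uI uH ∧ 2*A ≤ r w := by
    have h1 : ∀ᶠ x in nhdsWithin uI (Set.Ioi uI), 2*A ≤ r x :=
      htend.eventually (eventually_ge_atTop (2*A))
    have h2 : Set.Ioo uI uH ∈ nhdsWithin uI (Set.Ioi uI) :=
      Ioo_mem_nhdsGT_of_mem (Set.left_mem_Ico.2 hlt)
    have h2' : ∀ᶠ x in nhdsWithin uI (Set.Ioi uI), x ∈ Set.Ioo uI uH := h2
    obtain ⟨w, hw1, hw2⟩ := (h1.and h2').exists
    exact ⟨w, hw2, hw1⟩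
  obtain ⟨w, hwIoo, hw2A⟩ := hwex
  have hwS : w ∈ S := Ioo_subset_Ioc_self hwIoo
  -- minimum point of q on [w, uH]
  set q : ℝ → ℝ := fun t => r t ^ ((3:ℝ) - 2*κ) * ψ t ^ 2 with hqdef
  have hIccsub : Set.Icc w uH ⊆ S := hIccsubS hwS
  have hqcont : ContinuousOn q (Set.Icc w uH) :=
    ((hrc.mono hIccsub).rpow_const fun t ht => Or.inl (hrne t (hIccsub ht))).mul
      ((hψc.mono hIccsub).pow 2)
  obtain ⟨v, hvmem, hvmin⟩ := isCompact_Icc.exists_isMinOn (Set.nonempty_Icc.2 hwIoo.2.le) hqcont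
  have hvS : v ∈ S := hIccsub hvmem
  have hqnn : ∀ t ∈ S, 0 ≤ q t := fun t ht =>
    mul_nonneg (Real.rpow_nonneg (hrpos t ht).le _) (sq_nonneg _)
  -- lower bound for the weighted length
  have hp2 : (2*κ - 2 : ℝ) ≠ 0 := by intro h; linarith
  have hI₂ : c₂ ≤ ∫ t in Set.Ioc w uH, (-(r' t)) * r t ^ (2*κ - 2 - 1) := by
    rw [hFTC (2*κ - 2) hp2 w hwS]
    have h2A0 : (0:ℝ) < 2*A := by linarith
    have hrw : r w ^ (2*κ-2) ≤ (2*A) ^ (2*κ-2) :=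
      Real.rpow_le_rpow_of_nonpos h2A0 hw2A (by linarith)
    have he : (r w ^ (2*κ-2) - A ^ (2*κ-2)) / (2*κ-2)
        = (A ^ (2*κ-2) - r w ^ (2*κ-2)) / (2 - 2*κ) := by
      rw [div_eq_div_iff (by linarith) (by linarith)]
      ring
    rw [he, hc₂def, div_le_div_iff₀ (by linarith) (by linarith)]
    nlinarith [hrw]
  -- integrabilities on Ioc w uH
  have hWcont : ContinuousOn (fun t => (-(r' t)) * r t ^ (2*κ - 2 - 1)) (Set.Icc w uH) :=
    ((hr'c.mono hIccsub).neg).mul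
      ((hrc.mono hIccsub).rpow_const fun t ht => Or.inl (hrne t (hIccsub ht)))
  have hq_int1 : IntegrableOn (fun t => (-(r' t)) * r t ^ (2*κ - 2 - 1)) (Set.Ioc w uH) :=
    (hWcont.integrableOn_compact isCompact_Icc).mono_set Ioc_subset_Icc_self
  have hq_int2 : IntegrableOn (fun t => (-(r' t)) * ψ t ^ 2) (Set.Ioc w uH) :=
    hInt2.mono_set fun t ht => ⟨hwS.1.trans ht.1, ht.2⟩
  have hmono_pt : ∀ t ∈ Set.Ioc w uH,
      q v * ((-(r' t)) * r t ^ (2*κ-2-1)) ≤ (-(r' t)) * ψ t ^ 2 := by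
    intro t ht
    have htS : t ∈ S := ⟨hwS.1.trans ht.1, ht.2⟩
    have hqv : q v ≤ q t := hvmin (Ioc_subset_Icc_self ht)
    have hWpos : 0 < (-(r' t)) * r t ^ (2*κ-2-1) :=
      mul_pos (hr'pos t htS) (Real.rpow_pos_of_pos (hrpos t htS) _)
    have he : q t * ((-(r' t)) * r t ^ (2*κ-2-1)) = (-(r' t)) * ψ t ^ 2 := by
      have e1 : r t ^ ((3:ℝ) - 2*κ) * r t ^ (2*κ - 2 - 1) = 1 := by
        rw [← Real.rpow_add (hrpos t htS),
          show (3 - 2*κ + (2*κ - 2 - 1) : ℝ) = 0 by ring, Real.rpow_zero]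
      calc q t * ((-(r' t)) * r t ^ (2*κ-2-1))
          = (-(r' t)) * ψ t ^2 * (r t ^ ((3:ℝ) - 2*κ) * r t ^ (2*κ-2-1)) := by
            simp only [hqdef]; ring
        _ = (-(r' t)) * ψ t ^ 2 := by rw [e1, mul_one]
    calc q v * ((-(r' t)) * r t ^ (2*κ-2-1)) ≤ q t * ((-(r' t)) * r t ^ (2*κ-2-1)) :=
          mul_le_mul_of_nonneg_right hqv hWpos.le
      _ = (-(r' t)) * ψ t ^ 2 := he
  have hqvE : q v * c₂ ≤ E₂ := by
    calc q v * c₂ ≤ q v * ∫ t in Set.Ioc w uH, (-(r' t)) * r t ^ (2*κ-2-1) :=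
          mul_le_mul_of_nonneg_left hI₂ (hqnn v hvS)
      _ = ∫ t in Set.Ioc w uH, q v * ((-(r' t)) * r t ^ (2*κ-2-1)) :=
          (integral_const_mul _ _).symm
      _ ≤ ∫ t in Set.Ioc w uH, (-(r' t)) * ψ t ^ 2 :=
          setIntegral_mono_on (hq_int1.const_mul (q v)) hq_int2 measurableSet_Ioc hmono_pt
      _ ≤ E₂ := setIntegral_mono_set hInt2
          ((ae_restrict_iff' hSmeas).2 (Eventually.of_forall fun t ht =>
            mul_nonneg (hr'pos t ht).le (sq_nonneg _)))
          (HasSubset.Subset.eventuallyLE fun t ht => ⟨hwS.1.trans ht.1, ht.2⟩)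
  have hE₂nn : 0 ≤ E₂ := setIntegral_nonneg hSmeas fun t ht =>
    mul_nonneg (hr'pos t ht).le (sq_nonneg _)
  have hE₁nn : 0 ≤ E₁ := setIntegral_nonneg hSmeas fun t ht => hF₁nn t ht
  have hqv2 : q v ≤ E₂ / c₂ := (le_div_iff₀ hc₂).2 hqvE
  have hφv : |φ v| ≤ Real.sqrt E₂ / Real.sqrt c₂ := by
    have hsq : φ v ^ 2 = q v := by
      have e2 : r v ^ ((3:ℝ)/2 - κ) * r v ^ ((3:ℝ)/2 - κ) = r v ^ ((3:ℝ) - 2*κ) := by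
        rw [← Real.rpow_add (hrpos v hvS)]
        congr 1
        ring
      calc φ v ^ 2 = (r v ^ ((3:ℝ)/2-κ) * r v ^ ((3:ℝ)/2-κ)) * ψ v ^2 := by
            simp only [hφdef]; ring
        _ = q v := by rw [e2]
    rw [← Real.sqrt_sq_eq_abs, hsq]
    calc Real.sqrt (q v) ≤ Real.sqrt (E₂ / c₂) := Real.sqrt_le_sqrt hqv2
      _ = Real.sqrt E₂ / Real.sqrt c₂ := Real.sqrt_div hE₂nn c₂
  -- final assembly
  have hmain : |φ u| ≤ Real.sqrt E₂ / Real.sqrt c₂ + Real.sqrt E₁ * Real.sqrt c₁ := by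
    have h1 : |φ u| ≤ |φ v| + |φ u - φ v| := by
      have h := abs_add_le (φ v) (φ u - φ v)
      simpa using h
    have h2 := hdiff v u hvS hu
    linarith
  show |φ u| ≤ (Real.sqrt c₁ + 1 / Real.sqrt c₂) * (Real.sqrt E₁ + Real.sqrt E₂)
  have hC2 : 0 < Real.sqrt c₂ := Real.sqrt_pos.2 hc₂
  refine hmain.trans ?_
  have e : (Real.sqrt c₁ + 1 / Real.sqrt c₂) * (Real.sqrt E₁ + Real.sqrt E₂)
      = (Real.sqrt E₂ / Real.sqrt c₂ + Real.sqrt E₁ * Real.sqrt c₁)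
        + (Real.sqrt c₁ * Real.sqrt E₂ + Real.sqrt E₁ / Real.sqrt c₂) := by
    ring
  rw [e]
  have hx1 : 0 ≤ Real.sqrt c₁ * Real.sqrt E₂ :=
    mul_nonneg (Real.sqrt_nonneg _) (Real.sqrt_nonneg _)
  have hx2 : 0 ≤ Real.sqrt E₁ / Real.sqrt c₂ :=
    div_nonneg (Real.sqrt_nonneg _) (Real.sqrt_nonneg _)
  linarith
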